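/- Let K be a number field containing a primitive n-th root of unity, and S a finite set of places of K containing all infinite places such that the classes of the finite primes in S generate Cl_K/Cl_K^n. Then every α ∈ K* such that K(α^{1/n})/K is unramified outside S lies in U_S · (K*)^n, where U_S is the group of S-units. -/

import Mathlib

set_option maxHeartbeats 1000000

open NumberField IsDedekindDomain IsDedekindDomain.HeightOneSpectrum
open scoped nonZeroDivisors Multiplicative Classical

section auxA
variable {R : Type*} [CommRing R] [IsDedekindDomain R] {F : Type*} [Field F]
  [Algebra R F] [IsFractionRing R F]

/-- The `v`-adic valuation of a nonzero element in terms of `FractionalIdeal.count`. -/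
lemma aux_val_count (v : HeightOneSpectrum R) {x : F} (hx : x ≠ 0) :
    v.valuation F x = ((Multiplicative.ofAdd
      (-(FractionalIdeal.count F v (FractionalIdeal.spanSingleton R⁰ x))) : Multiplicative ℤ)
      : WithZero (Multiplicative ℤ)) := by
  obtain ⟨⟨a, s⟩, rfl⟩ := IsLocalization.mk'_surjective R⁰ x
  dsimp only at hx ⊢
  have ha : a ≠ 0 := by
    rintro rfl; simp [IsLocalization.mk'_eq_iff_eq_mul] at hx
  have hsp : FractionalIdeal.spanSingleton R⁰ (IsLocalization.mk' F a s) ≠ 0 := by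
    rwa [ne_eq, FractionalIdeal.spanSingleton_eq_zero_iff]
  have hrep : FractionalIdeal.spanSingleton R⁰ (IsLocalization.mk' F a s) =
      FractionalIdeal.spanSingleton R⁰ ((algebraMap R F (s : R)))⁻¹ *
        (Ideal.span {a} : Ideal R) := by
    rw [FractionalIdeal.coeIdeal_span_singleton,
      FractionalIdeal.spanSingleton_mul_spanSingleton]
    congr 1
    rw [IsFractionRing.mk'_eq_div, div_eq_mul_inv, mul_comm]
  rw [FractionalIdeal.count_well_defined F v hsp hrep, valuation_of_mk',
    v.intValuation_if_neg ha,
    v.intValuation_if_neg (nonZeroDivisors.coe_ne_zero s),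
    WithZero.exp_eq_coe_ofAdd, WithZero.exp_eq_coe_ofAdd]
  rw [← WithZero.coe_div, WithZero.coe_inj, div_eq_iff_eq_mul, ← ofAdd_add]
  congr 1
  ring
end auxA

section auxB
variable {R : Type*} [CommRing R] [IsDedekindDomain R]
  {A : Type*} [CommRing A] [IsDedekindDomain A] [Algebra R A]
local notation "f" => algebraMap R A

/-- The ramification index as a count of factors. -/
lemma aux_ramIdx_count (v : HeightOneSpectrum R) (w : HeightOneSpectrum A)
    (hmap : Ideal.map f v.asIdeal ≠ ⊥) :
    Ideal.ramificationIdx' v.asIdeal w.asIdeal =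
      (Associates.mk w.asIdeal).count (Associates.mk (Ideal.map f v.asIdeal)).factors := by
  have hset : {n : ℕ | Ideal.map f v.asIdeal ≤ w.asIdeal ^ n} =
      Set.Iic ((Associates.mk w.asIdeal).count
        (Associates.mk (Ideal.map f v.asIdeal)).factors) := by
    ext n
    rw [Set.mem_setOf_eq, Set.mem_Iic, ← Ideal.dvd_iff_le, ← Associates.mk_le_mk_iff_dvd,
      Associates.mk_pow,
      Associates.prime_pow_dvd_iff_le (Associates.mk_ne_zero.mpr hmap) w.associates_irreducible]
  rw [Ideal.ramificationIdx', hset, csSup_Iic]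

end auxB

section auxB2
variable {R : Type*} [CommRing R] [IsDedekindDomain R]
lemma aux_pow_count_dvd (v : HeightOneSpectrum R) {I : Ideal R} (hI : I ≠ ⊥) :
    v.asIdeal ^ ((Associates.mk v.asIdeal).count (Associates.mk I).factors) ∣ I := by
  rw [← Associates.mk_le_mk_iff_dvd, Associates.mk_pow,
    Associates.prime_pow_dvd_iff_le (Associates.mk_ne_zero.mpr hI) v.associates_irreducible]

lemma aux_pow_succ_count_not_dvd (v : HeightOneSpectrum R) {I : Ideal R} (hI : I ≠ ⊥) :
    ¬ v.asIdeal ^ ((Associates.mk v.asIdeal).count (Associates.mk I).factors + 1) ∣ I := by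
  rw [← Associates.mk_le_mk_iff_dvd, Associates.mk_pow,
    Associates.prime_pow_dvd_iff_le (Associates.mk_ne_zero.mpr hI) v.associates_irreducible]
  omega
end auxB2

section auxB3
variable {R : Type*} [CommRing R] [IsDedekindDomain R]
  {A : Type*} [CommRing A] [IsDedekindDomain A] [Algebra R A]
local notation "f" => algebraMap R A
/-- Key local computation: the count of `span {f r}` at a prime `w` above `v`. -/
lemma aux_count_span_map (hf : Function.Injective f)
    (v : HeightOneSpectrum R) (w : HeightOneSpectrum A)
    (hvw : w.asIdeal.comap f = v.asIdeal) {r : R} (hr : r ≠ 0) :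
    (Associates.mk w.asIdeal).count (Associates.mk (Ideal.span {f r})).factors =
      Ideal.ramificationIdx' v.asIdeal w.asIdeal *
        (Associates.mk v.asIdeal).count (Associates.mk (Ideal.span {r})).factors := by
  have hr0 : Ideal.span {r} ≠ (⊥ : Ideal R) := by
    rwa [ne_eq, Ideal.span_singleton_eq_bot]
  obtain ⟨J, hJ⟩ := aux_pow_count_dvd v hr0
  set c := (Associates.mk v.asIdeal).count (Associates.mk (Ideal.span {r})).factors with hc
  have hJ0 : J ≠ ⊥ := by
    rintro rfl; simp at hJ; exact hr hJ
  have hJv : ¬ v.asIdeal ∣ J := by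
    rintro ⟨J', rfl⟩
    apply aux_pow_succ_count_not_dvd v hr0
    rw [← hc]
    exact ⟨J', by rw [hJ, pow_succ]; ring⟩
  have hmapv : Ideal.map f v.asIdeal ≠ ⊥ := by
    rw [ne_eq, Ideal.map_eq_bot_iff_of_injective hf]; exact v.ne_bot
  have hmapJ : Ideal.map f J ≠ ⊥ := by
    rw [ne_eq, Ideal.map_eq_bot_iff_of_injective hf]; exact hJ0
  have hmapvc : (Ideal.map f v.asIdeal) ^ c ≠ ⊥ := pow_ne_zero _ hmapv
  have hspan : Ideal.span {f r} = (Ideal.map f v.asIdeal) ^ c * Ideal.map f J := by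
    rw [← Ideal.map_pow, ← Ideal.map_mul, ← hJ, Ideal.map_span, Set.image_singleton]
  have hwJ : ¬ w.asIdeal ∣ Ideal.map f J := by
    intro hd
    apply hJv
    rw [Ideal.dvd_iff_le] at hd ⊢
    rw [← hvw]
    exact le_trans Ideal.le_comap_map (Ideal.comap_mono hd)
  have hcount0 : (Associates.mk w.asIdeal).count (Associates.mk (Ideal.map f J)).factors = 0 := by
    by_contra h
    exact hwJ ((Associates.count_ne_zero_iff_dvd hmapJ w.irreducible).mp h)
  rw [hspan, ← Associates.mk_mul_mk,
    Associates.count_mul (Associates.mk_ne_zero.mpr hmapvc) (Associates.mk_ne_zero.mpr hmapJ)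
      w.associates_irreducible,
    Associates.mk_pow,
    Associates.count_pow (Associates.mk_ne_zero.mpr hmapv) w.associates_irreducible,
    aux_ramIdx_count v w hmapv, hcount0]
  ring
end auxB3

section auxC
variable {R : Type*} [CommRing R] [IsDedekindDomain R] {F : Type*} [Field F]
  [Algebra R F] [IsFractionRing R F]

/-- Generating set: classes of the primes in `S`. -/
def genSet (S : Finset (HeightOneSpectrum R)) : Set (ClassGroup R) :=
  {c : ClassGroup R | ∃ p ∈ S, ∃ h : p.asIdeal ∈ (Ideal R)⁰, c = ClassGroup.mk0 ⟨p.asIdeal, h⟩}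

variable (F) in
/-- Every element of the subgroup generated by classes of primes in `S` is the class
of a unit fractional ideal supported on `S`. -/
lemma aux_exists_supported_rep {S : Finset (HeightOneSpectrum R)} {c : ClassGroup R}
    (hc : c ∈ Subgroup.closure (genSet S)) :
    ∃ J : (FractionalIdeal R⁰ F)ˣ,
      (∀ v ∉ S, FractionalIdeal.count F v (J : FractionalIdeal R⁰ F) = 0) ∧
        c = ClassGroup.mk F J := by
  induction hc using Subgroup.closure_induction with
  | mem c hcmem =>
    obtain ⟨p, hpS, h, rfl⟩ := hcmem
    refine ⟨FractionalIdeal.mk0 F ⟨p.asIdeal, h⟩, fun v hv => ?_, (ClassGroup.mk_mk0 F _).symm⟩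
    rw [FractionalIdeal.coe_mk0]
    rw [show ((⟨p.asIdeal, h⟩ : (Ideal R)⁰) : Ideal R) = p.asIdeal from rfl]
    rw [FractionalIdeal.count_maximal]
    simp only [ite_eq_right_iff]
    intro hpv
    exact absurd (hpv ▸ hpS) hv
  | one => exact ⟨1, fun v _ => by simp [FractionalIdeal.count_one], (map_one _).symm⟩
  | mul a b _ _ iha ihb =>
    obtain ⟨J₁, h₁, rfl⟩ := iha
    obtain ⟨J₂, h₂, rfl⟩ := ihb
    refine ⟨J₁ * J₂, fun v hv => ?_, (map_mul _ _ _).symm⟩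
    rw [Units.val_mul, FractionalIdeal.count_mul F v J₁.ne_zero J₂.ne_zero, h₁ v hv, h₂ v hv,
      add_zero]
  | inv a _ iha =>
    obtain ⟨J, hJ, rfl⟩ := iha
    refine ⟨J⁻¹, fun v hv => ?_, (map_inv _ _).symm⟩
    have := FractionalIdeal.count_mul F v (J⁻¹).ne_zero J.ne_zero
    rw [← Units.val_mul, inv_mul_cancel, Units.val_one, FractionalIdeal.count_one, hJ v hv,
      add_zero] at this
    exact this.symm

variable (F) in
/-- Conversely, the class of a unit fractional ideal supported on `S` lies in the
subgroup generated by the classes of primes in `S`. -/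
lemma aux_supported_mem_closure {S : Finset (HeightOneSpectrum R)}
    {I : (FractionalIdeal R⁰ F)ˣ}
    (hI : ∀ v ∉ S, FractionalIdeal.count F v (I : FractionalIdeal R⁰ F) = 0) :
    ClassGroup.mk F I ∈ Subgroup.closure (genSet S) := by
  have hfin : {v : HeightOneSpectrum R |
      FractionalIdeal.count F v (I : FractionalIdeal R⁰ F) ≠ 0}.Finite :=
    FractionalIdeal.finite_factors (I : FractionalIdeal R⁰ F)
  set t : Finset (HeightOneSpectrum R) := hfin.toFinset with ht
  have htS : ∀ p ∈ t, p ∈ S := by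
    intro p hp
    rw [ht, Set.Finite.mem_toFinset] at hp
    by_contra hpS
    exact hp (hI p hpS)
  have hne : ∀ p : HeightOneSpectrum R, p.asIdeal ∈ (Ideal R)⁰ := fun p =>
    mem_nonZeroDivisors_iff_ne_zero.mpr (by simpa using p.ne_bot)
  have hIeq : I = ∏ p ∈ t, (FractionalIdeal.mk0 F ⟨p.asIdeal, hne p⟩) ^
      (FractionalIdeal.count F p (I : FractionalIdeal R⁰ F)) := by
    apply Units.ext
    have hcoe : ((∏ p ∈ t, (FractionalIdeal.mk0 F ⟨p.asIdeal, hne p⟩) ^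
        (FractionalIdeal.count F p (I : FractionalIdeal R⁰ F)) : (FractionalIdeal R⁰ F)ˣ) :
          FractionalIdeal R⁰ F) =
        ∏ p ∈ t, ((FractionalIdeal.mk0 F ⟨p.asIdeal, hne p⟩ ^
          (FractionalIdeal.count F p (I : FractionalIdeal R⁰ F)) : (FractionalIdeal R⁰ F)ˣ) :
            FractionalIdeal R⁰ F) := map_prod (Units.coeHom _) _ t
    rw [hcoe]
    have : ∀ p ∈ t, ((FractionalIdeal.mk0 F ⟨p.asIdeal, hne p⟩ ^
        (FractionalIdeal.count F p (I : FractionalIdeal R⁰ F)) : (FractionalIdeal R⁰ F)ˣ) :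
          FractionalIdeal R⁰ F) =
        ((p.asIdeal : FractionalIdeal R⁰ F) ^
          (FractionalIdeal.count F p (I : FractionalIdeal R⁰ F))) := by
      intro p _
      rw [Units.val_zpow_eq_zpow_val, FractionalIdeal.coe_mk0]
    rw [Finset.prod_congr rfl this]
    rw [← finprod_eq_prod_of_mulSupport_subset _ (s := t)]
    · exact (FractionalIdeal.finprod_heightOneSpectrum_factorization' F I.ne_zero).symm
    · intro v hv
      rw [Function.mem_mulSupport] at hv
      rw [ht, Set.Finite.coe_toFinset, Set.mem_setOf_eq]
      intro h0
      exact hv (by rw [h0, zpow_zero])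
  rw [hIeq, map_prod]
  apply Subgroup.prod_mem
  intro p hp
  rw [map_zpow]
  apply Subgroup.zpow_mem
  apply Subgroup.subset_closure
  exact ⟨p, htS p hp, hne p, (ClassGroup.mk_mk0 F _)⟩

/-- The quotient trick: if the `n`-th powers together with `X` generate `G` and `X ⊆ H`,
then any `g` with `g ^ n ∈ H` lies in `H`. -/
lemma aux_mem_of_pow_mem {G : Type*} [CommGroup G] [Finite G] {H : Subgroup G}
    {X : Set G} (n : ℕ)
    (hgen : Subgroup.closure (X ∪ {c : G | ∃ d : G, c = d ^ n}) = ⊤) (hX : X ⊆ H)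
    {g : G} (hg : g ^ n ∈ H) : g ∈ H := by
  let π := QuotientGroup.mk' H
  have hsurj : Function.Surjective (powMonoidHom n : (G ⧸ H) →* (G ⧸ H)) := by
    intro q
    obtain ⟨c, rfl⟩ := QuotientGroup.mk'_surjective H q
    have hc : c ∈ Subgroup.closure (X ∪ {c : G | ∃ d : G, c = d ^ n}) := by
      rw [hgen]; trivial
    have : c ∈ Subgroup.comap π (powMonoidHom n : (G ⧸ H) →* (G ⧸ H)).range := by
      refine Subgroup.closure_le _ |>.mpr ?_ hc
      rintro y (hy | ⟨d, rfl⟩)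
      · refine Subgroup.mem_comap.mpr ⟨1, ?_⟩
        rw [powMonoidHom_apply, one_pow]
        exact ((QuotientGroup.eq_one_iff y).mpr (hX hy)).symm
      · exact Subgroup.mem_comap.mpr ⟨π d, by rw [powMonoidHom_apply, ← map_pow]⟩
    exact this
  have hinj : Function.Injective (powMonoidHom n : (G ⧸ H) →* (G ⧸ H)) :=
    Finite.injective_iff_surjective.mpr hsurj
  have h1 : (powMonoidHom n : (G ⧸ H) →* (G ⧸ H)) (π g) = (powMonoidHom n) 1 := by
    rw [powMonoidHom_apply, powMonoidHom_apply, one_pow, ← map_pow]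
    exact (QuotientGroup.eq_one_iff _).mpr hg
  exact (QuotientGroup.eq_one_iff _).mp (hinj h1)
end auxC

/-- Let `K` be a number field containing a primitive `n`-th root of unity and `S` a finite
set of places of `K` containing all infinite places (encoded by its set `S` of finite
primes) such that the classes of the finite primes in `S` generate `Cl_K/Cl_Kⁿ`.  If
`α ∈ K*` is such that `K(α^{1/n})/K` is unramified outside `S`, then `α ∈ U_S · (K*)ⁿ`,
where `U_S` is the group of `S`-units. -/
theorem mem_sUnits_mul_nth_powers_of_unramified_outside_S
    {K L : Type*} [Field K] [NumberField K] [Field L] [NumberField L] [Algebra K L]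
    (n : ℕ) (hn : 0 < n) (ζ : K) (hζ : IsPrimitiveRoot ζ n)
    (S : Finset (HeightOneSpectrum (𝓞 K)))
    -- the classes of the primes in `S` generate `Cl_K/Cl_Kⁿ`
    (hgen : Subgroup.closure
        ({c : ClassGroup (𝓞 K) | ∃ p ∈ S, ∃ h : p.asIdeal ∈ (Ideal (𝓞 K))⁰,
            c = ClassGroup.mk0 ⟨p.asIdeal, h⟩} ∪
          {c : ClassGroup (𝓞 K) | ∃ d : ClassGroup (𝓞 K), c = d ^ n}) = ⊤)
    (α : Kˣ) (x : L) (hx : x ^ n = algebraMap K L (α : K))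
    -- `L = K(α^{1/n})`
    (hL : Algebra.adjoin K ({x} : Set L) = ⊤)
    -- `K(α^{1/n})/K` is unramified outside `S`
    (hunr : ∀ v : HeightOneSpectrum (𝓞 K), v ∉ S →
      ∀ w : HeightOneSpectrum (𝓞 L),
        w.asIdeal.comap (algebraMap (𝓞 K) (𝓞 L)) = v.asIdeal →
          Ideal.ramificationIdx' v.asIdeal w.asIdeal = 1) :
    ∃ u γ : Kˣ, (∀ v : HeightOneSpectrum (𝓞 K), v ∉ S → v.valuation K ((u : K)) = 1) ∧
      α = u * γ ^ n := by
  have hα0 : (α : K) ≠ 0 := Units.ne_zero α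
  have hsp0 : FractionalIdeal.spanSingleton (𝓞 K)⁰ (α : K) ≠ 0 := by
    rwa [ne_eq, FractionalIdeal.spanSingleton_eq_zero_iff]
  set d : HeightOneSpectrum (𝓞 K) → ℤ := fun v =>
    FractionalIdeal.count K v (FractionalIdeal.spanSingleton (𝓞 K)⁰ (α : K)) with hd
  obtain ⟨m, hm⟩ : ∃ m, n = m + 1 := ⟨n - 1, (Nat.succ_pred_eq_of_pos hn).symm⟩
  -- injectivity of 𝓞 K → 𝓞 L
  have hinjL : Function.Injective (algebraMap (𝓞 K) (𝓞 L)) := by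
    have h1 : Function.Injective (algebraMap (𝓞 K) L) := by
      rw [IsScalarTower.algebraMap_eq (𝓞 K) K L]
      exact (algebraMap K L).injective.comp (IsFractionRing.injective (𝓞 K) K)
    rw [IsScalarTower.algebraMap_eq (𝓞 K) (𝓞 L) L, RingHom.coe_comp] at h1
    exact Function.Injective.of_comp h1
  -- Step A : n divides d v for v outside S
  have hstepA : ∀ v ∉ S, (n : ℤ) ∣ d v := by
    intro v hv
    obtain ⟨⟨a, s⟩, hmk⟩ := IsLocalization.mk'_surjective (𝓞 K)⁰ (α : K)
    dsimp only at hmk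
    have ha : a ≠ 0 := by
      rintro rfl; rw [IsLocalization.mk'_zero] at hmk; exact hα0 hmk.symm
    have hs0 : (s : 𝓞 K) ≠ 0 := nonZeroDivisors.coe_ne_zero s
    set r : 𝓞 K := a * (s : 𝓞 K) ^ m with hr
    have hr0 : r ≠ 0 := mul_ne_zero ha (pow_ne_zero _ hs0)
    -- a prime of L above v
    haveI : Algebra.IsIntegral (𝓞 K) (𝓞 L) := IsIntegralClosure.isIntegral_algebra (𝓞 K) L
    haveI : (⊥ : Ideal (𝓞 L)).IsPrime := Ideal.bot_prime
    obtain ⟨Q, -, hQp, hQc⟩ :=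
      Ideal.exists_ideal_over_prime_of_isIntegral_of_isPrime v.asIdeal ⊥
        (by rw [Ideal.comap_bot_of_injective _ hinjL]; exact bot_le)
    have hQ0 : Q ≠ ⊥ := by
      rintro rfl
      exact v.ne_bot (by rw [← hQc, Ideal.comap_bot_of_injective _ hinjL])
    set w : HeightOneSpectrum (𝓞 L) := ⟨Q, hQp, hQ0⟩ with hw
    have he : Ideal.ramificationIdx' v.asIdeal w.asIdeal = 1 :=
      hunr v hv w hQc
    -- the n-th root y of r in L, and its integrality
    set y : L := x * algebraMap K L (algebraMap (𝓞 K) K (s : 𝓞 K)) with hy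
    have hspec : (α : K) * algebraMap (𝓞 K) K (s : 𝓞 K) = algebraMap (𝓞 K) K a := by
      rw [← hmk]; exact IsLocalization.mk'_spec K a s
    have hyn : y ^ n = algebraMap (𝓞 L) L (algebraMap (𝓞 K) (𝓞 L) r) := by
      rw [hy, mul_pow, hx, ← map_pow, ← map_mul,
        ← IsScalarTower.algebraMap_apply (𝓞 K) (𝓞 L) L,
        IsScalarTower.algebraMap_apply (𝓞 K) K L]
      congr 1
      rw [hr, map_mul, map_pow, ← hspec, hm]
      ring
    have hx0 : x ≠ 0 := by
      rintro rfl
      rw [zero_pow hn.ne'] at hx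
      exact hα0 ((map_eq_zero_iff _ (algebraMap K L).injective).mp hx.symm)
    have hy0 : y ≠ 0 := by
      apply mul_ne_zero hx0
      rw [ne_eq, map_eq_zero_iff _ (algebraMap K L).injective,
        map_eq_zero_iff _ (IsFractionRing.injective (𝓞 K) K)]
      exact hs0
    have hyint : IsIntegral ℤ y := by
      refine IsIntegral.of_pow hn ?_
      rw [hyn]
      exact RingOfIntegers.isIntegral_coe _
    set Y : 𝓞 L := ⟨y, hyint⟩ with hYdef
    have hY0 : Y ≠ 0 := by
      intro h0
      exact hy0 (by rw [show y = algebraMap (𝓞 L) L Y from rfl, h0, map_zero])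
    have hYn : Y ^ n = algebraMap (𝓞 K) (𝓞 L) r := by
      apply (IsFractionRing.injective (𝓞 L) L)
      rw [map_pow]
      exact hyn
    -- the counts
    have hkey := aux_count_span_map hinjL v w hQc hr0
    rw [he, one_mul] at hkey
    have hspanY : Ideal.span {algebraMap (𝓞 K) (𝓞 L) r} = Ideal.span {Y} ^ n := by
      rw [← hYn, Ideal.span_singleton_pow]
    have hY0' : Ideal.span {Y} ≠ (⊥ : Ideal (𝓞 L)) := by
      rwa [ne_eq, Ideal.span_singleton_eq_bot]
    have hcountY : (Associates.mk w.asIdeal).count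
          (Associates.mk (Ideal.span {algebraMap (𝓞 K) (𝓞 L) r})).factors
        = n * (Associates.mk w.asIdeal).count (Associates.mk (Ideal.span {Y})).factors := by
      rw [hspanY, Associates.mk_pow,
        Associates.count_pow (Associates.mk_ne_zero.mpr hY0') w.associates_irreducible]
    -- the fractional ideal count of α at v
    have hsp_rep : FractionalIdeal.spanSingleton (𝓞 K)⁰ (α : K) =
        FractionalIdeal.spanSingleton (𝓞 K)⁰ ((algebraMap (𝓞 K) K (s : 𝓞 K)))⁻¹ *
          (Ideal.span {a} : Ideal (𝓞 K)) := by
      rw [FractionalIdeal.coeIdeal_span_singleton,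
        FractionalIdeal.spanSingleton_mul_spanSingleton, ← hmk]
      congr 1
      rw [IsFractionRing.mk'_eq_div, div_eq_mul_inv, mul_comm]
    have hdv : d v = ((Associates.mk v.asIdeal).count (Associates.mk
          (Ideal.span {a})).factors : ℤ) -
        ((Associates.mk v.asIdeal).count (Associates.mk
          (Ideal.span {(s : 𝓞 K)})).factors : ℤ) := by
      rw [hd]
      exact FractionalIdeal.count_well_defined K v hsp0 hsp_rep
    have hspanr : Ideal.span {r} = Ideal.span {a} * Ideal.span {(s : 𝓞 K)} ^ m := by
      rw [hr, Ideal.span_singleton_pow, Ideal.span_singleton_mul_span_singleton]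
    have hspa0 : Ideal.span {a} ≠ (⊥ : Ideal (𝓞 K)) := by
      rwa [ne_eq, Ideal.span_singleton_eq_bot]
    have hsps0 : Ideal.span {(s : 𝓞 K)} ≠ (⊥ : Ideal (𝓞 K)) := by
      rwa [ne_eq, Ideal.span_singleton_eq_bot]
    have hca : (Associates.mk v.asIdeal).count (Associates.mk (Ideal.span {r})).factors =
        (Associates.mk v.asIdeal).count (Associates.mk (Ideal.span {a})).factors +
          m * (Associates.mk v.asIdeal).count (Associates.mk
            (Ideal.span {(s : 𝓞 K)})).factors := by
      rw [hspanr, ← Associates.mk_mul_mk,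
        Associates.count_mul (Associates.mk_ne_zero.mpr hspa0)
          (Associates.mk_ne_zero.mpr (pow_ne_zero _ hsps0)) v.associates_irreducible,
        Associates.mk_pow,
        Associates.count_pow (Associates.mk_ne_zero.mpr hsps0) v.associates_irreducible]
    have hnat : n * (Associates.mk w.asIdeal).count (Associates.mk (Ideal.span {Y})).factors =
        (Associates.mk v.asIdeal).count (Associates.mk (Ideal.span {a})).factors +
          m * (Associates.mk v.asIdeal).count (Associates.mk
            (Ideal.span {(s : 𝓞 K)})).factors := by
      rw [← hcountY, hkey, hca]
    refine ⟨((Associates.mk w.asIdeal).count (Associates.mk (Ideal.span {Y})).factors : ℤ) -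
      ((Associates.mk v.asIdeal).count (Associates.mk (Ideal.span {(s : 𝓞 K)})).factors : ℤ),
      ?_⟩
    have hint : (n : ℤ) * (Associates.mk w.asIdeal).count
          (Associates.mk (Ideal.span {Y})).factors =
        ((Associates.mk v.asIdeal).count (Associates.mk (Ideal.span {a})).factors : ℤ) +
          (m : ℤ) * (Associates.mk v.asIdeal).count (Associates.mk
            (Ideal.span {(s : 𝓞 K)})).factors := by
      exact_mod_cast hnat
    have hm' : (n : ℤ) = (m : ℤ) + 1 := by exact_mod_cast hm
    rw [hdv]
    linear_combination (-1 : ℤ) * hint +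
      (((Associates.mk v.asIdeal).count (Associates.mk
        (Ideal.span {(s : 𝓞 K)})).factors : ℤ)) * hm' 
  -- Step B : construct the element γ
  set H : Subgroup (ClassGroup (𝓞 K)) := Subgroup.closure (genSet S) with hH
  set e : HeightOneSpectrum (𝓞 K) → ℤ := fun v => if v ∈ S then 0 else d v / n with he
  have hefin : ∀ᶠ v : HeightOneSpectrum (𝓞 K) in Filter.cofinite, e v = 0 := by
    apply Filter.Eventually.mono
      (FractionalIdeal.finite_factors (FractionalIdeal.spanSingleton (𝓞 K)⁰ (α : K)))
    intro v hv
    by_cases h : v ∈ S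
    · simp [he, h]
    · simp [he, h, hd, hv]
  set B : FractionalIdeal (𝓞 K)⁰ K :=
    ∏ᶠ v : HeightOneSpectrum (𝓞 K), (v.asIdeal : FractionalIdeal (𝓞 K)⁰ K) ^ (e v) with hB
  have hBc : ∀ v, FractionalIdeal.count K v B = e v := fun v =>
    FractionalIdeal.count_finprod K v e hefin
  have hB0 : B ≠ 0 := by
    rw [hB]
    have hfs : (Function.mulSupport fun v : HeightOneSpectrum (𝓞 K) =>
        (v.asIdeal : FractionalIdeal (𝓞 K)⁰ K) ^ (e v)).Finite := by
      apply Set.Finite.subset hefin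
      intro v hv
      rw [Function.mem_mulSupport] at hv
      intro h0
      exact hv (by rw [h0, zpow_zero])
    rw [finprod_eq_prod _ hfs]
    apply Finset.prod_ne_zero_iff.mpr
    intro v _
    exact zpow_ne_zero _ (FractionalIdeal.coeIdeal_ne_zero.mpr v.ne_bot)
  set Bu : (FractionalIdeal (𝓞 K)⁰ K)ˣ := Units.mk0 B hB0 with hBu
  have hBuval : (Bu : FractionalIdeal (𝓞 K)⁰ K) = B := rfl
  set Iu : (FractionalIdeal (𝓞 K)⁰ K)ˣ := toPrincipalIdeal (𝓞 K) K α with hIu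
  have hIuval : (Iu : FractionalIdeal (𝓞 K)⁰ K) =
      FractionalIdeal.spanSingleton (𝓞 K)⁰ (α : K) := coe_toPrincipalIdeal _
  have hmkIu : ClassGroup.mk K Iu = 1 := by
    rw [ClassGroup.mk_eq_one_iff]
    exact ⟨⟨(α : K), by rw [hIuval, FractionalIdeal.coe_spanSingleton]⟩⟩
  have hcount_inv : ∀ (J : (FractionalIdeal (𝓞 K)⁰ K)ˣ) (v : HeightOneSpectrum (𝓞 K)),
      FractionalIdeal.count K v ((J⁻¹ : (FractionalIdeal (𝓞 K)⁰ K)ˣ) :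
        FractionalIdeal (𝓞 K)⁰ K) =
      - FractionalIdeal.count K v (J : FractionalIdeal (𝓞 K)⁰ K) := by
    intro J v
    have h := FractionalIdeal.count_mul K v (J⁻¹).ne_zero J.ne_zero
    rw [← Units.val_mul, inv_mul_cancel, Units.val_one, FractionalIdeal.count_one] at h
    linarith
  have hndS : ∀ v ∉ S, (n : ℤ) * e v = d v := by
    intro v hv
    rw [he]
    simp only [hv, if_false]
    exact Int.mul_ediv_cancel' (hstepA v hv)
  -- the class of Bu lies in H
  have hgen' : Subgroup.closure (genSet S ∪
      {c : ClassGroup (𝓞 K) | ∃ d : ClassGroup (𝓞 K), c = d ^ n}) = ⊤ := hgen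
  have hmkB : ClassGroup.mk K Bu ∈ H := by
    rw [hH]
    apply aux_mem_of_pow_mem n hgen' Subgroup.subset_closure
    have h1 : (ClassGroup.mk K Bu) ^ n = ClassGroup.mk K (Bu ^ n * Iu⁻¹) := by
      rw [map_mul, map_inv, hmkIu, inv_one, mul_one, map_pow]
    rw [h1]
    apply aux_supported_mem_closure
    intro v hv
    rw [Units.val_mul, FractionalIdeal.count_mul K v (Bu ^ n).ne_zero (Iu⁻¹).ne_zero,
      hcount_inv, Units.val_pow_eq_pow_val, FractionalIdeal.count_pow, hBuval, hBc, hIuval]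
    have hthis := hndS v hv
    simp only [hd] at hthis ⊢
    linarith
  -- a representative supported on S
  obtain ⟨J, hJsupp, hBJ⟩ := aux_exists_supported_rep K hmkB
  have hprin : ClassGroup.mk K (Bu * J⁻¹) = 1 := by
    rw [map_mul, map_inv, ← hBJ, mul_inv_cancel]
  obtain ⟨g, hg⟩ := (ClassGroup.mk_eq_one_iff.mp hprin).principal
  have hval0 : ((Bu * J⁻¹ : (FractionalIdeal (𝓞 K)⁰ K)ˣ) : FractionalIdeal (𝓞 K)⁰ K) ≠ 0 :=
    (Bu * J⁻¹).ne_zero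
  have hgval : ((Bu * J⁻¹ : (FractionalIdeal (𝓞 K)⁰ K)ˣ) : FractionalIdeal (𝓞 K)⁰ K) =
      FractionalIdeal.spanSingleton (𝓞 K)⁰ g := by
    apply FractionalIdeal.coeToSubmodule_injective
    beta_reduce
    rw [hg]
    exact (FractionalIdeal.coe_spanSingleton _ _).symm
  have hg0 : g ≠ 0 := by
    rintro rfl
    rw [FractionalIdeal.spanSingleton_zero] at hgval
    exact hval0 hgval
  have hgcount : ∀ v ∉ S, FractionalIdeal.count K v
      (FractionalIdeal.spanSingleton (𝓞 K)⁰ g) = e v := by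
    intro v hv
    rw [← hgval, Units.val_mul, FractionalIdeal.count_mul K v Bu.ne_zero (J⁻¹).ne_zero,
      hcount_inv, hJsupp v hv, neg_zero, add_zero, hBuval, hBc]
  -- conclusion
  set γ : Kˣ := Units.mk0 g hg0 with hγ
  refine ⟨α * (γ ^ n)⁻¹, γ, ?_, (inv_mul_cancel_right α (γ ^ n)).symm⟩
  intro v hv
  have hu0 : ((α * (γ ^ n)⁻¹ : Kˣ) : K) ≠ 0 := Units.ne_zero _
  rw [aux_val_count v hu0]
  have huval : ((α * (γ ^ n)⁻¹ : Kˣ) : K) = (α : K) * (g ^ n)⁻¹ := by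
    rw [Units.val_mul, Units.val_inv_eq_inv_val, Units.val_pow_eq_pow_val, hγ, Units.val_mk0]
  have hcount : FractionalIdeal.count K v (FractionalIdeal.spanSingleton (𝓞 K)⁰
      ((α * (γ ^ n)⁻¹ : Kˣ) : K)) = 0 := by
    rw [huval, ← FractionalIdeal.spanSingleton_mul_spanSingleton, ← inv_pow,
      ← FractionalIdeal.spanSingleton_pow, ← FractionalIdeal.spanSingleton_inv,
      FractionalIdeal.count_mul K v hsp0
        (pow_ne_zero _ (inv_ne_zero (by rwa [ne_eq, FractionalIdeal.spanSingleton_eq_zero_iff]))),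
      FractionalIdeal.count_pow, FractionalIdeal.count_inv, hgcount v hv]
    have hthis := hndS v hv
    simp only [hd] at hthis
    linarith
  rw [hcount]
  rw [neg_zero, ofAdd_zero, WithZero.coe_one]
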